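/- Let [l,u] and [l',u'] be boxes in ℝⁿ with [l',u'] ⊆ [l,u] (i.e., l ≤ l' and u' ≤ u componentwise), and let c = (l+u)/2 and c' = (l'+u')/2 be their centers. Then Vol̄([l,u]) − Vol̄([l',u']) ≥ 2‖c' − c‖₁, where Vol̄([l,u]) = Σᵢ (u(i) − l(i)) and ‖v‖₁ = Σᵢ |v(i)|. -/
import Mathlib


open Finset

/-- Surrogate volume of the box [l,u]: Σᵢ (u i − l i). -/
noncomputable def volBar {n : ℕ} (l u : Fin n → ℝ) : ℝ := ∑ i, (u i - l i)

/-- 1-norm of a vector: Σᵢ |v i|. -/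
noncomputable def norm1 {n : ℕ} (v : Fin n → ℝ) : ℝ := ∑ i, |v i|

/-- Lower bound of Theorem 1: for nested boxes, the surrogate-volume reduction
is at least twice the 1-norm of the shift of the centers. -/
theorem volume_reduction_lower_bound {n : ℕ}
    (l u l' u' c c' : Fin n → ℝ)
    (hl : l ≤ l') (hu : u' ≤ u) (hlu' : l' ≤ u')
    (hc : c = (l + u) / 2) (hc' : c' = (l' + u') / 2) :
    volBar l u - volBar l' u' ≥ 2 * norm1 (c' - c) := by
  subst hc hc'
  unfold volBar norm1
  rw [ge_iff_le, Finset.mul_sum, ← Finset.sum_sub_distrib]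
  apply Finset.sum_le_sum
  intro i _
  have h1 := hl i
  have h2 := hu i
  simp only [Pi.sub_apply, Pi.div_apply, Pi.add_apply, Pi.ofNat_apply]
  push_cast
  rcases abs_cases ((l' i + u' i) / 2 - (l i + u i) / 2) with ⟨h, _⟩ | ⟨h, _⟩ <;>
    rw [h] <;> linarith
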